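/- Suppose m := min_{0 ≤ j ≤ a} p₂(j) > 0 and a ≥ −log(1 + q(0)/m)/log(1 − q(0)) − 1. Then ∑_{j=0}^a p₂(j)/(1−q(0))^{j+1} ≥ 1, and consequently sup_{p ∈ [0,1)} ξ₂(p) ≥ ξ₁. -/

import Mathlib

open Finset

/-- `Q̃₂(ξ,p) = 1 − e^ξ + (1−p)·e^ξ·∑_{j=0}^b q(j)·p^j·e^{jξ}`, the numerator of the
critical-exponent equation for the algorithm class `𝒜₂`. -/
noncomputable def Qt2 (b : ℕ) (q : ℕ → ℝ) (ξ p : ℝ) : ℝ :=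
  1 - Real.exp ξ + (1 - p) * Real.exp ξ *
    ∑ j ∈ Finset.range (b + 1), q j * p ^ j * Real.exp (j * ξ)

/-- `Q₁(ξ) = 1 − e^ξ·∑_{j=0}^a p₂(j)·e^{jξ}`, whose unique positive root is the
critical exponent of the minimal-randomization algorithm `𝒢₁`. -/
noncomputable def Q1 (a : ℕ) (p₂ : ℕ → ℝ) (ξ : ℝ) : ℝ :=
  1 - Real.exp ξ * ∑ j ∈ Finset.range (a + 1), p₂ j * Real.exp (j * ξ)

/-- If `m := min_{0 ≤ j ≤ a} p₂(j) > 0` and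
`a ≥ −log(1 + q(0)/m)/log(1 − q(0)) − 1`, then
`∑_{j=0}^a p₂(j)/(1−q(0))^{j+1} ≥ 1` and consequently
`sup_{p ∈ [0,1)} ξ₂(p) ≥ ξ₁`. -/
theorem stmt_18 (a b : ℕ) (q p₂ : ℕ → ℝ)
    (hq : ∀ j, 0 ≤ q j) (hp₂ : ∀ j, 0 ≤ p₂ j)
    (hqb : ∀ j, b < j → q j = 0) (hp₂a : ∀ j, a < j → p₂ j = 0)
    (hq0 : 0 < q 0) (hp₂pos : 0 < ∑ j ∈ Finset.range (a + 1), p₂ j)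
    (hsum : ∑ j ∈ Finset.range (b + 1), q j + ∑ j ∈ Finset.range (a + 1), p₂ j = 1)
    (ξ₁ : ℝ) (hξ₁ : 0 < ξ₁ ∧ Q1 a p₂ ξ₁ = 0 ∧ ∀ ξ : ℝ, 0 < ξ → Q1 a p₂ ξ = 0 → ξ = ξ₁)
    (ξ₂ : ℝ → ℝ)
    (hξ₂ : ∀ p ∈ Set.Ico (0 : ℝ) 1,
      (0 < ξ₂ p ∧ p * Real.exp (ξ₂ p) < 1 ∧ Qt2 b q (ξ₂ p) p = 0) ∧
      ∀ ξ : ℝ, 0 < ξ → p * Real.exp ξ < 1 → Qt2 b q ξ p = 0 → ξ = ξ₂ p)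
    (m : ℝ) (hm : m = (Finset.range (a + 1)).inf' (Finset.nonempty_range_add_one) p₂)
    (hmpos : 0 < m)
    (ha : (a : ℝ) ≥ -Real.log (1 + q 0 / m) / Real.log (1 - q 0) - 1) :
    1 ≤ ∑ j ∈ Finset.range (a + 1), p₂ j / (1 - q 0) ^ (j + 1) ∧
      ξ₁ ≤ sSup (ξ₂ '' Set.Ico (0 : ℝ) 1) := by

  obtain ⟨hξ₁pos, hξ₁root, hξ₁uniq⟩ := hξ₁
  have hQnn : (0:ℝ) ≤ ∑ j ∈ Finset.range (b + 1), q j :=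
    Finset.sum_nonneg fun j _ => hq j
  have hq0le : q 0 ≤ ∑ j ∈ Finset.range (b + 1), q j :=
    Finset.single_le_sum (fun j _ => hq j) (Finset.mem_range.mpr (Nat.succ_pos b))
  have hq0lt1 : q 0 < 1 := by linarith
  set r : ℝ := 1 - q 0 with hrdef
  have hrpos : 0 < r := by simp only [hrdef]; linarith
  have hrlt1 : r < 1 := by simp only [hrdef]; linarith
  have hlr : Real.log r < 0 := Real.log_neg hrpos hrlt1
  have hrinv1 : (1:ℝ) < r⁻¹ := (one_lt_inv₀ hrpos).mpr hrlt1
  have hL : (0:ℝ) < 1 + q 0 / m := by positivity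
  have ha' : Real.log (1 + q 0 / m) ≤ -(((a:ℝ) + 1) * Real.log r) := by
    have h1 : -Real.log (1 + q 0 / m) / Real.log r ≤ (a:ℝ) + 1 := by linarith
    have h2 := (div_le_iff_of_neg hlr).mp h1
    linarith
  have key : 1 + q 0 / m ≤ (r⁻¹) ^ (a + 1) := by
    have h2 := Real.exp_le_exp.mpr ha'
    rw [Real.exp_log hL] at h2
    have h3 : Real.exp (-(((a:ℝ) + 1) * Real.log r)) = (r⁻¹) ^ (a + 1) := by
      rw [Real.exp_neg, show ((a:ℝ) + 1) = ((a+1 : ℕ) : ℝ) by push_cast; ring,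
        Real.exp_nat_mul, Real.exp_log hrpos, ← inv_pow]
    rwa [h3] at h2
  have hmle : ∀ j ∈ Finset.range (a + 1), m ≤ p₂ j := by
    intro j hj; rw [hm]; exact Finset.inf'_le _ hj
  have hgeom : ∑ j ∈ Finset.range (a + 1), (r⁻¹) ^ j = ((r⁻¹) ^ (a + 1) - 1) / (r⁻¹ - 1) :=
    geom_sum_eq (ne_of_gt hrinv1) _
  have hsum1 : ∑ j ∈ Finset.range (a + 1), m / r ^ (j + 1)
      = m * r⁻¹ * (((r⁻¹) ^ (a + 1) - 1) / (r⁻¹ - 1)) := by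
    rw [← hgeom, Finset.mul_sum]
    apply Finset.sum_congr rfl
    intro j hj
    rw [div_eq_mul_inv, ← inv_pow, pow_succ]
    ring
  have h4 : q 0 ≤ m * ((r⁻¹) ^ (a + 1) - 1) := by
    nlinarith [mul_le_mul_of_nonneg_left key hmpos.le,
      mul_div_cancel₀ (q 0) (ne_of_gt hmpos)]
  have hr1 : r⁻¹ - 1 = q 0 * r⁻¹ := by
    field_simp
    linarith [hrdef]
  have hone : (1:ℝ) ≤ m * r⁻¹ * (((r⁻¹) ^ (a + 1) - 1) / (r⁻¹ - 1)) := by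
    have h5 : m * r⁻¹ * (((r⁻¹) ^ (a + 1) - 1) / (r⁻¹ - 1))
        = m * ((r⁻¹) ^ (a + 1) - 1) / q 0 := by
      rw [hr1]
      field_simp
    rw [h5, le_div_iff₀ hq0, one_mul]
    exact h4
  have part1 : 1 ≤ ∑ j ∈ Finset.range (a + 1), p₂ j / r ^ (j + 1) := by
    have hstep : ∑ j ∈ Finset.range (a + 1), m / r ^ (j + 1)
        ≤ ∑ j ∈ Finset.range (a + 1), p₂ j / r ^ (j + 1) := by
      apply Finset.sum_le_sum
      intro j hj
      have hpow : (0:ℝ) < r ^ (j + 1) := pow_pos hrpos _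
      exact (div_le_div_iff_of_pos_right hpow).mpr (hmle j hj)
    calc (1:ℝ) ≤ m * r⁻¹ * (((r⁻¹) ^ (a + 1) - 1) / (r⁻¹ - 1)) := hone
      _ = ∑ j ∈ Finset.range (a + 1), m / r ^ (j + 1) := hsum1.symm
      _ ≤ _ := hstep
  -- Part 2
  set ξs : ℝ := -Real.log r with hξsdef
  have hξspos : 0 < ξs := by simp only [hξsdef]; linarith
  have hexpξs : Real.exp ξs = r⁻¹ := by
    rw [hξsdef, Real.exp_neg, Real.exp_log hrpos]
  have hQ1ξs : Q1 a p₂ ξs = 1 - ∑ j ∈ Finset.range (a + 1), p₂ j / r ^ (j + 1) := by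
    unfold Q1
    congr 1
    rw [Finset.mul_sum]
    apply Finset.sum_congr rfl
    intro j hj
    rw [Real.exp_nat_mul, hexpξs, div_eq_mul_inv, ← inv_pow, pow_succ]
    ring
  have hQ1ξs_le : Q1 a p₂ ξs ≤ 0 := by rw [hQ1ξs]; linarith
  have hanti : ∀ x y : ℝ, x ≤ y → Q1 a p₂ y ≤ Q1 a p₂ x := by
    intro x y hxy
    unfold Q1
    have hs : Real.exp x * ∑ j ∈ Finset.range (a + 1), p₂ j * Real.exp (j * x)
        ≤ Real.exp y * ∑ j ∈ Finset.range (a + 1), p₂ j * Real.exp (j * y) := by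
      apply mul_le_mul (Real.exp_le_exp.mpr hxy)
      · apply Finset.sum_le_sum
        intro j hj
        exact mul_le_mul_of_nonneg_left
          (Real.exp_le_exp.mpr (mul_le_mul_of_nonneg_left hxy (Nat.cast_nonneg j))) (hp₂ j)
      · exact Finset.sum_nonneg fun j _ => mul_nonneg (hp₂ j) (Real.exp_pos _).le
      · exact (Real.exp_pos y).le
    linarith
  have hξ₁le : ξ₁ ≤ ξs := by
    rcases le_or_gt ξ₁ ξs with h | h
    · exact h
    · have h0 : Q1 a p₂ ξ₁ ≤ Q1 a p₂ ξs := hanti _ _ h.le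
      rw [hξ₁root] at h0
      have hz : Q1 a p₂ ξs = 0 := le_antisymm hQ1ξs_le h0
      exact (hξ₁uniq ξs hξspos hz).ge
  have h0mem : (0:ℝ) ∈ Set.Ico (0:ℝ) 1 := ⟨le_refl 0, zero_lt_one⟩
  obtain ⟨-, huniq0⟩ := hξ₂ 0 h0mem
  have hQt2ξs : Qt2 b q ξs 0 = 0 := by
    unfold Qt2
    have hsum0 : ∑ j ∈ Finset.range (b + 1), q j * (0:ℝ) ^ j * Real.exp (j * ξs) = q 0 := by
      rw [Finset.sum_eq_single 0]
      · simp
      · intro j hj hj0; simp [zero_pow hj0]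
      · intro h; exact absurd (Finset.mem_range.mpr (Nat.succ_pos b)) h
    rw [hsum0, hexpξs]
    have hrne : r ≠ 0 := ne_of_gt hrpos
    field_simp
    simp only [hrdef]
    ring
  have hξ₂0 : ξ₂ 0 = ξs :=
    (huniq0 ξs hξspos (by rw [zero_mul]; exact zero_lt_one) hQt2ξs).symm
  set P : ℝ := ∑ j ∈ Finset.range (a + 1), p₂ j with hPdef
  have hQP : ∑ j ∈ Finset.range (b + 1), q j = 1 - P := by linarith
  have hP1 : P ≤ 1 := by linarith
  have hbdd : BddAbove (ξ₂ '' Set.Ico (0:ℝ) 1) := by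
    refine ⟨-Real.log P, ?_⟩
    rintro x ⟨p, hp, rfl⟩
    obtain ⟨⟨hpos, hlt, hroot⟩, -⟩ := hξ₂ p hp
    obtain ⟨hp0, hp1⟩ := hp
    set E : ℝ := Real.exp (ξ₂ p) with hEdef
    have hE : 0 < E := Real.exp_pos _
    set S : ℝ := ∑ j ∈ Finset.range (b + 1), q j * p ^ j * Real.exp (j * ξ₂ p) with hSdef
    have hS : S ≤ 1 - P := by
      rw [hSdef, ← hQP]
      apply Finset.sum_le_sum
      intro j hj
      have h1 : q j * p ^ j * Real.exp (j * ξ₂ p) = q j * (p * E) ^ j := by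
        rw [mul_pow, hEdef, ← Real.exp_nat_mul]; ring
      rw [h1]
      calc q j * (p * E) ^ j ≤ q j * 1 :=
            mul_le_mul_of_nonneg_left
              (pow_le_one₀ (mul_nonneg hp0 hE.le) hlt.le) (hq j)
        _ = q j := mul_one _
    have hSnn : 0 ≤ S :=
      Finset.sum_nonneg fun j _ =>
        mul_nonneg (mul_nonneg (hq j) (pow_nonneg hp0 j)) (Real.exp_pos _).le
    clear_value E S
    have hroot' : E - 1 = (1 - p) * E * S := by
      unfold Qt2 at hroot; rw [← hSdef, ← hEdef] at hroot; linarith only [hroot]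
    have hkey : E * P ≤ 1 := by
      have c1 : (1 - p) * E * S ≤ (1 - p) * E * (1 - P) :=
        mul_le_mul_of_nonneg_left hS (mul_nonneg (by linarith only [hp1]) hE.le)
      have hpE : 0 ≤ p * E := mul_nonneg hp0 hE.le
      have hring : (1 - p) * E = E - p * E := by ring
      have hc : (1 - p) * E ≤ E := by linarith only [hpE, hring]
      have c2 : (1 - p) * E * (1 - P) ≤ E * (1 - P) :=
        mul_le_mul_of_nonneg_right hc (by linarith only [hP1])
      linarith only [c1, c2, hroot']
    have hEP : E ≤ Real.exp (-Real.log P) := by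
      rw [Real.exp_neg, Real.exp_log hp₂pos, inv_eq_one_div, le_div_iff₀ hp₂pos]
      exact hkey
    rw [hEdef] at hEP
    exact Real.exp_le_exp.mp hEP
  have hmem : ξs ∈ ξ₂ '' Set.Ico (0:ℝ) 1 := ⟨0, h0mem, hξ₂0⟩
  exact ⟨part1, le_trans hξ₁le (le_csSup hbdd hmem)⟩
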